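/- arXiv:1610.00017 — 2 statements merged into one kernel-verified Lean document; each statement's English description precedes it below -/
import Mathlib

section
/- Let T > 0, let k₁ ≠ k₂ be integers, let a, b ∈ ℂ, and let t ∈ [0, T]. Then the deviation of the accumulated squared distance from its linear part is uniformly bounded: | ∫_0^t |a·e^{2πi k₁ s/T} + b·e^{2πi k₂ s/T}|² ds − (|a|² + |b|²)·t | ≤ 2·|a|·|b|·T/(π·|k₁ − k₂|). -/
open Complex

/-- The accumulated squared distance between two-carrier OFDM signals deviates from
its linear part `(|a|²+|b|²)·t` by at most `2·|a|·|b|·T/(π·|k₁−k₂|)`, uniformly in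
`t ∈ [0,T]`. -/
theorem ofdm_two_carrier_distance_linear_bound (T : ℝ) (hT : 0 < T) (k₁ k₂ : ℤ)
    (hk : k₁ ≠ k₂) (a b : ℂ) (t : ℝ) (ht : t ∈ Set.Icc 0 T) :
    |(∫ s in (0 : ℝ)..t,
        (‖a * Complex.exp (2 * Real.pi * Complex.I * (k₁ : ℂ) * (s : ℂ) / (T : ℂ)) +
          b * Complex.exp (2 * Real.pi * Complex.I * (k₂ : ℂ) * (s : ℂ) / (T : ℂ))‖) ^ 2) -
      (‖a‖ ^ 2 + ‖b‖ ^ 2) * t| ≤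
    2 * ‖a‖ * ‖b‖ * T / (Real.pi * |(k₁ : ℝ) - (k₂ : ℝ)|) := by
  have hT' : (T : ℂ) ≠ 0 := by exact_mod_cast hT.ne'
  have hΔ : ((k₁ : ℂ) - k₂) ≠ 0 := by
    exact_mod_cast sub_ne_zero.mpr (fun h => hk (by exact_mod_cast h))
  set c : ℂ := 2 * Real.pi * Complex.I * ((k₁ : ℂ) - k₂) / T with hc
  have hpi : ((Real.pi : ℂ)) ≠ 0 := by exact_mod_cast Real.pi_ne_zero
  have hc0 : c ≠ 0 := by
    exact div_ne_zero (mul_ne_zero (mul_ne_zero (mul_ne_zero two_ne_zero hpi)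
      Complex.I_ne_zero) hΔ) hT'
  set p : ℂ := a * (starRingEnd ℂ) b with hp
  have hre0 : ∀ k : ℤ, ∀ s : ℝ, (2 * Real.pi * Complex.I * (k : ℂ) * (s : ℂ) / (T : ℂ)).re = 0 := by
    intro k s
    have : (2 * Real.pi * Complex.I * (k : ℂ) * (s : ℂ) / (T : ℂ))
        = ((2 * Real.pi * k * s / T : ℝ) : ℂ) * Complex.I := by
      push_cast; field_simp
    rw [this]; simp
  -- pointwise identity
  have hpt : ∀ s : ℝ,
      (‖a * Complex.exp (2 * Real.pi * Complex.I * (k₁ : ℂ) * (s : ℂ) / (T : ℂ)) +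
          b * Complex.exp (2 * Real.pi * Complex.I * (k₂ : ℂ) * (s : ℂ) / (T : ℂ))‖) ^ 2
      = ‖a‖ ^ 2 + ‖b‖ ^ 2 + 2 * (p * Complex.exp (c * s)).re := by
    intro s
    rw [Complex.sq_norm, Complex.normSq_add]
    have habs : ∀ k : ℤ,
        Complex.normSq (Complex.exp (2 * Real.pi * Complex.I * (k : ℂ) * (s : ℂ) / (T : ℂ))) = 1 := by
      intro k
      have h := Complex.norm_exp (2 * Real.pi * Complex.I * (k : ℂ) * (s : ℂ) / (T : ℂ))
      rw [hre0 k s, Real.exp_zero] at h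
      rw [← Complex.sq_norm, h, one_pow]
    have hconj : (starRingEnd ℂ) (Complex.exp (2 * Real.pi * Complex.I * (k₂ : ℂ) * (s : ℂ) / (T : ℂ)))
        = Complex.exp (-(2 * Real.pi * Complex.I * (k₂ : ℂ) * (s : ℂ) / (T : ℂ))) := by
      rw [← Complex.exp_conj]
      congr 1
      apply Complex.ext
      · simp [hre0 k₂ s]
      · simp
        ring
    have hcross : a * Complex.exp (2 * Real.pi * Complex.I * (k₁ : ℂ) * (s : ℂ) / (T : ℂ)) *
        (starRingEnd ℂ) (b * Complex.exp (2 * Real.pi * Complex.I * (k₂ : ℂ) * (s : ℂ) / (T : ℂ)))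
        = p * Complex.exp (c * s) := by
      rw [map_mul, hconj, hp]
      rw [mul_mul_mul_comm, ← Complex.exp_add]
      congr 2
      rw [hc]
      field_simp
      ring
    rw [map_mul, map_mul, habs k₁, habs k₂, hcross,
      Complex.sq_norm, Complex.sq_norm, mul_one, mul_one]
  -- integrability / continuity
  have hcont : Continuous fun s : ℝ => (p * Complex.exp (c * s)) :=
    continuous_const.mul (Continuous.cexp (continuous_const.mul Complex.continuous_ofReal))
  -- the integral
  have hint : (∫ s in (0 : ℝ)..t,
        (‖a * Complex.exp (2 * Real.pi * Complex.I * (k₁ : ℂ) * (s : ℂ) / (T : ℂ)) +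
          b * Complex.exp (2 * Real.pi * Complex.I * (k₂ : ℂ) * (s : ℂ) / (T : ℂ))‖) ^ 2)
      = (‖a‖ ^ 2 + ‖b‖ ^ 2) * t
        + 2 * (p * ((Complex.exp (c * t) - 1) / c)).re := by
    simp_rw [hpt]
    rw [intervalIntegral.integral_add (intervalIntegrable_const)
      (Continuous.intervalIntegrable (by continuity) 0 t),
      intervalIntegral.integral_const, intervalIntegral.integral_const_mul]
    have hre : (∫ s in (0:ℝ)..t, (p * Complex.exp (c * s)).re)
        = (∫ s in (0:ℝ)..t, p * Complex.exp (c * s)).re := by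
      exact Complex.reCLM.intervalIntegral_comp_comm (hcont.intervalIntegrable 0 t)
    rw [hre, intervalIntegral.integral_const_mul, integral_exp_mul_complex hc0]
    push_cast
    rw [mul_zero, Complex.exp_zero]
    ring_nf
  rw [hint]
  have key : |(‖a‖ ^ 2 + ‖b‖ ^ 2) * t
      + 2 * (p * ((Complex.exp (c * t) - 1) / c)).re
      - (‖a‖ ^ 2 + ‖b‖ ^ 2) * t|
      = |2 * (p * ((Complex.exp (c * t) - 1) / c)).re| := by ring_nf
  rw [key]
  have h1 : |2 * (p * ((Complex.exp (c * t) - 1) / c)).re|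
      ≤ 2 * ‖p * ((Complex.exp (c * t) - 1) / c)‖ := by
    rw [abs_mul, _root_.abs_two]
    exact mul_le_mul_of_nonneg_left (Complex.abs_re_le_norm _) (by norm_num)
  refine h1.trans ?_
  rw [norm_mul, norm_div]
  have hexp : ‖Complex.exp (c * t) - 1‖ ≤ 2 := by
    calc ‖Complex.exp (c * t) - 1‖
        ≤ ‖Complex.exp (c * t)‖ + ‖(1 : ℂ)‖ := by
          simpa using norm_sub_le (Complex.exp (c*t)) (1 : ℂ)
      _ ≤ 2 := by
          rw [Complex.norm_exp]
          have : (c * t).re = 0 := by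
            have : c * t = 2 * Real.pi * Complex.I * ((k₁ : ℂ) - k₂) * (t : ℂ) / (T : ℂ) := by
              rw [hc]; ring
            rw [this]
            have h2 := hre0 (k₁ - k₂) t
            push_cast at h2 ⊢
            convert h2 using 2
            try ring
          rw [this, Real.exp_zero]
          norm_num
  have habsc : ‖c‖ = 2 * Real.pi * |(k₁:ℝ) - k₂| / T := by
    rw [hc, norm_div, norm_mul, norm_mul, norm_mul]
    have : ‖(k₁ : ℂ) - k₂‖ = |(k₁:ℝ) - k₂| := by
      rw [show ((k₁ : ℂ) - k₂) = (((k₁:ℝ) - k₂ : ℝ) : ℂ) by push_cast; ring, Complex.norm_real, Real.norm_eq_abs]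
    rw [this, Complex.norm_I, Complex.norm_two, Complex.norm_real, Complex.norm_real, Real.norm_eq_abs,
      Real.norm_eq_abs,
      abs_of_pos Real.pi_pos, abs_of_pos hT, mul_one]
  have hΔR : 0 < |(k₁:ℝ) - k₂| := by
    rw [abs_pos, sub_ne_zero]
    exact_mod_cast hk
  have hpabs : ‖p‖ = ‖a‖ * ‖b‖ := by
    rw [hp, norm_mul, Complex.norm_conj]
  rw [habsc, hpabs]
  have hD : 0 < 2 * Real.pi * |(k₁:ℝ) - k₂| / T :=
    div_pos (mul_pos (by positivity) hΔR) hT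
  refine le_trans (b := 2 * (‖a‖ * ‖b‖ *
      (2 / (2 * Real.pi * |(k₁:ℝ) - k₂| / T)))) ?_ (le_of_eq ?_)
  · gcongr
  · field_simp
end

section
/- Let n ≥ 1, T > 0 and 0 ≤ t ≤ T. Let X, X′ : Ω → (Fin n → ℂ) be random vectors on a probability space such that the 2n coordinate random variables X_1, …, X_n, X′_1, …, X′_n are mutually independent, each square-integrable with mean zero. Then the expected accumulated squared distance between the corresponding OFDM signals is exactly linear in t: E[ ∫_0^t | ∑_{k=1}^n (X_k − X′_k)·e^{2πi k s/T} |² ds ] = t · ∑_{k=1}^n E[ |X_k − X′_k|² ]. -/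
open MeasureTheory Complex ProbabilityTheory

/-- The product of two independent integrable complex random variables has integral
equal to the product of the integrals. -/
theorem indepFun_integral_mul_complex {Ω : Type*} [MeasurableSpace Ω] {μ : Measure Ω}
    {f g : Ω → ℂ} (h : IndepFun f g μ)
    (hf : Integrable f μ) (hg : Integrable g μ) :
    ∫ ω, f ω * g ω ∂μ = (∫ ω, f ω ∂μ) * ∫ ω, g ω ∂μ := by
  have hfg : Integrable (fun ω => f ω * g ω) μ := h.integrable_mul hf hg
  have hRR : IndepFun (fun ω => (f ω).re) (fun ω => (g ω).re) μ :=
    h.comp Complex.measurable_re Complex.measurable_re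
  have hRI : IndepFun (fun ω => (f ω).re) (fun ω => (g ω).im) μ :=
    h.comp Complex.measurable_re Complex.measurable_im
  have hIR : IndepFun (fun ω => (f ω).im) (fun ω => (g ω).re) μ :=
    h.comp Complex.measurable_im Complex.measurable_re
  have hII : IndepFun (fun ω => (f ω).im) (fun ω => (g ω).im) μ :=
    h.comp Complex.measurable_im Complex.measurable_im
  have hfr : Integrable (fun ω => (f ω).re) μ := by simpa using hf.re
  have hfi : Integrable (fun ω => (f ω).im) μ := by simpa using hf.im
  have hgr : Integrable (fun ω => (g ω).re) μ := by simpa using hg.re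
  have hgi : Integrable (fun ω => (g ω).im) μ := by simpa using hg.im
  have irr : ∫ ω, (f ω).re * (g ω).re ∂μ = (∫ ω, (f ω).re ∂μ) * ∫ ω, (g ω).re ∂μ :=
    hRR.integral_fun_mul_eq_mul_integral hfr.1 hgr.1
  have iri : ∫ ω, (f ω).re * (g ω).im ∂μ = (∫ ω, (f ω).re ∂μ) * ∫ ω, (g ω).im ∂μ :=
    hRI.integral_fun_mul_eq_mul_integral hfr.1 hgi.1
  have iir : ∫ ω, (f ω).im * (g ω).re ∂μ = (∫ ω, (f ω).im ∂μ) * ∫ ω, (g ω).re ∂μ :=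
    hIR.integral_fun_mul_eq_mul_integral hfi.1 hgr.1
  have iii : ∫ ω, (f ω).im * (g ω).im ∂μ = (∫ ω, (f ω).im ∂μ) * ∫ ω, (g ω).im ∂μ :=
    hII.integral_fun_mul_eq_mul_integral hfi.1 hgi.1
  have mrr : Integrable (fun ω => (f ω).re * (g ω).re) μ := hRR.integrable_mul hfr hgr
  have mri : Integrable (fun ω => (f ω).re * (g ω).im) μ := hRI.integrable_mul hfr hgi
  have mir : Integrable (fun ω => (f ω).im * (g ω).re) μ := hIR.integrable_mul hfi hgr
  have mii : Integrable (fun ω => (f ω).im * (g ω).im) μ := hII.integrable_mul hfi hgi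
  have ereF : (∫ ω, f ω ∂μ).re = ∫ ω, (f ω).re ∂μ := by simpa using (integral_re hf).symm
  have eimF : (∫ ω, f ω ∂μ).im = ∫ ω, (f ω).im ∂μ := by simpa using (integral_im hf).symm
  have ereG : (∫ ω, g ω ∂μ).re = ∫ ω, (g ω).re ∂μ := by simpa using (integral_re hg).symm
  have eimG : (∫ ω, g ω ∂μ).im = ∫ ω, (g ω).im ∂μ := by simpa using (integral_im hg).symm
  apply Complex.ext
  · have : (∫ ω, f ω * g ω ∂μ).re = ∫ ω, (f ω * g ω).re ∂μ := by
      simpa using (integral_re hfg).symm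
    rw [this]
    simp only [Complex.mul_re]
    rw [integral_sub mrr mii]
    rw [irr, iii, ereF, ereG, eimF, eimG]
  · have : (∫ ω, f ω * g ω ∂μ).im = ∫ ω, (f ω * g ω).im ∂μ := by
      simpa using (integral_im hfg).symm
    rw [this]
    simp only [Complex.mul_im]
    rw [integral_add mri mir]
    rw [iri, iir, ereF, ereG, eimF, eimG]

/-- The product of two complex `L²` random variables is integrable. -/
theorem memLp_two_integrable_mul {Ω : Type*} [MeasurableSpace Ω] {μ : Measure Ω}
    {f g : Ω → ℂ} (hf : MemLp f 2 μ) (hg : MemLp g 2 μ) :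
    Integrable (fun ω => f ω * g ω) μ := by
  have hpqr : (1 : ENNReal) / 1 = 1 / 2 + 1 / 2 := by
    rw [ENNReal.div_add_div_same, one_div_one]
    norm_num
    rw [ENNReal.div_self] <;> norm_num
  have := hg.smul hf (r := 1)
  rw [memLp_one_iff_integrable] at this
  exact this

/-- Complex conjugation preserves `MemLp`. -/
theorem memLp_conj_complex {Ω : Type*} [MeasurableSpace Ω] {μ : Measure Ω} {p : ENNReal}
    {f : Ω → ℂ} (hf : MemLp f p μ) :
    MemLp (fun ω => (starRingEnd ℂ) (f ω)) p μ :=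
  hf.of_le_mul (c := 1) (Complex.continuous_conj.comp_aestronglyMeasurable hf.1)
    (Filter.Eventually.of_forall fun ω => by simp)

noncomputable def ofdmE (T : ℝ) {n : ℕ} (k : Fin n) (s : ℝ) : ℂ :=
  Complex.exp (2 * Real.pi * Complex.I * ((k : ℕ) + 1 : ℂ) * (s : ℂ) / (T : ℂ))

lemma ofdmE_continuous (T : ℝ) {n : ℕ} (k : Fin n) : Continuous (ofdmE T k) := by
  unfold ofdmE
  exact Complex.continuous_exp.comp
    ((continuous_const.mul Complex.continuous_ofReal).div_const _)

noncomputable def ofdmC (T t : ℝ) {n : ℕ} (k l : Fin n) : ℂ :=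
  ∫ s in (0:ℝ)..t, ofdmE T k s * (starRingEnd ℂ) (ofdmE T l s)

lemma ofdmC_diag (T t : ℝ) {n : ℕ} (k : Fin n) : ofdmC T t k k = (t : ℂ) := by
  unfold ofdmC
  have h : ∀ s : ℝ, ofdmE T k s * (starRingEnd ℂ) (ofdmE T k s) = 1 := by
    intro s
    rw [Complex.mul_conj, ← Complex.sq_norm]
    unfold ofdmE
    rw [Complex.norm_exp]
    have hre : (2 * Real.pi * Complex.I * ((k : ℕ) + 1 : ℂ) * (s : ℂ) / (T : ℂ)).re = 0 := by
      have : (2 * Real.pi * Complex.I * ((k : ℕ) + 1 : ℂ) * (s : ℂ) / (T : ℂ)) =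
          ((2 * Real.pi * ((k : ℕ) + 1) * s / T : ℝ) : ℂ) * Complex.I := by
        push_cast
        ring
      rw [this]
      simp
    rw [hre]
    simp
  simp_rw [h]
  simp

lemma ofdm_time_integral (T : ℝ) (t : ℝ) {n : ℕ} (a : Fin n → ℂ) :
    (∫ s in (0:ℝ)..t, (‖∑ k : Fin n, a k * ofdmE T k s‖) ^ 2) =
    (∑ k : Fin n, ∑ l : Fin n,
      a k * (starRingEnd ℂ) (a l) * ofdmC T t k l).re := by
  have h1 : ∀ s : ℝ, (‖∑ k : Fin n, a k * ofdmE T k s‖) ^ 2 =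
      (∑ k : Fin n, ∑ l : Fin n,
        a k * (starRingEnd ℂ) (a l) * (ofdmE T k s * (starRingEnd ℂ) (ofdmE T l s))).re := by
    intro s
    have habs : ∀ z : ℂ, (‖z‖) ^ 2 = (z * (starRingEnd ℂ) z).re := by
      intro z; rw [Complex.mul_conj]; simp [Complex.sq_norm]
    rw [habs, map_sum, Finset.sum_mul_sum]
    congr 1
    refine Finset.sum_congr rfl fun k _ => Finset.sum_congr rfl fun l _ => ?_
    rw [map_mul]
    ring
  simp_rw [h1]
  have hcont : ∀ k l : Fin n, Continuous (fun s : ℝ =>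
      a k * (starRingEnd ℂ) (a l) * (ofdmE T k s * (starRingEnd ℂ) (ofdmE T l s))) := by
    intro k l
    exact continuous_const.mul ((ofdmE_continuous T k).mul
      (Complex.continuous_conj.comp (ofdmE_continuous T l)))
  have hInt : ∀ k l : Fin n, IntervalIntegrable (fun s : ℝ =>
      a k * (starRingEnd ℂ) (a l) * (ofdmE T k s * (starRingEnd ℂ) (ofdmE T l s)))
      MeasureTheory.volume 0 t := fun k l => (hcont k l).intervalIntegrable _ _
  have hsumInt : ∀ k : Fin n, IntervalIntegrable (fun s : ℝ => ∑ l : Fin n,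
      a k * (starRingEnd ℂ) (a l) * (ofdmE T k s * (starRingEnd ℂ) (ofdmE T l s)))
      MeasureTheory.volume 0 t := by
    intro k
    exact (continuous_finset_sum _ fun l _ => hcont k l).intervalIntegrable _ _
  have hsumInt2 : IntervalIntegrable (fun s : ℝ => ∑ k : Fin n, ∑ l : Fin n,
      a k * (starRingEnd ℂ) (a l) * (ofdmE T k s * (starRingEnd ℂ) (ofdmE T l s)))
      MeasureTheory.volume 0 t :=
    (continuous_finset_sum _ fun k _ =>
      continuous_finset_sum _ fun l _ => hcont k l).intervalIntegrable _ _
  rw [show (fun s : ℝ => (∑ k : Fin n, ∑ l : Fin n,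
      a k * (starRingEnd ℂ) (a l) * (ofdmE T k s * (starRingEnd ℂ) (ofdmE T l s))).re) =
      (fun s : ℝ => Complex.reCLM (∑ k : Fin n, ∑ l : Fin n,
      a k * (starRingEnd ℂ) (a l) * (ofdmE T k s * (starRingEnd ℂ) (ofdmE T l s)))) from rfl]
  rw [ContinuousLinearMap.intervalIntegral_comp_comm _ hsumInt2]
  rw [intervalIntegral.integral_finset_sum (fun k _ => hsumInt k)]
  simp_rw [intervalIntegral.integral_finset_sum (fun l (_ : l ∈ Finset.univ) => hInt _ l),
    intervalIntegral.integral_const_mul]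
  rfl

/-- Random coding linearizes OFDM distances: if the `2n` coordinates of the random
codewords `X, X′ : Ω → ℂⁿ` are mutually independent, square-integrable and mean zero,
then the expected accumulated squared distance between the corresponding OFDM signals
is exactly linear in `t`:
`E[∫_0^t |∑_k (X_k − X′_k)·e^{2πiks/T}|² ds] = t·∑_k E[|X_k − X′_k|²]`. -/
theorem ofdm_random_coding_expected_distance_linear
    (n : ℕ) (hn : 1 ≤ n) (T : ℝ) (hT : 0 < T) (t : ℝ) (ht : t ∈ Set.Icc 0 T)
    {Ω : Type*} [MeasurableSpace Ω] (μ : Measure Ω) [IsProbabilityMeasure μ]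
    (X X' : Ω → Fin n → ℂ)
    (hindep : ProbabilityTheory.iIndepFun
      (Sum.elim (fun k ω => X ω k) (fun k ω => X' ω k)) μ)
    (hL2 : ∀ i : Fin n ⊕ Fin n,
      MemLp (Sum.elim (fun k ω => X ω k) (fun k ω => X' ω k) i) 2 μ)
    (hmean : ∀ i : Fin n ⊕ Fin n,
      ∫ ω, Sum.elim (fun k ω => X ω k) (fun k ω => X' ω k) i ω ∂μ = 0) :
    (∫ ω, (∫ s in (0 : ℝ)..t,
        (‖∑ k : Fin n, (X ω k - X' ω k) *
          Complex.exp (2 * Real.pi * Complex.I * ((k : ℕ) + 1 : ℂ) * (s : ℂ) / (T : ℂ))‖) ^ 2)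
      ∂μ) =
    t * ∑ k : Fin n, ∫ ω, (‖X ω k - X' ω k‖) ^ 2 ∂μ := by
  have one_le_two' : (1 : ENNReal) ≤ 2 := one_le_two
  -- L² facts for coordinates and differences
  have hX2 : ∀ k : Fin n, MemLp (fun ω => X ω k) 2 μ := fun k => hL2 (Sum.inl k)
  have hX'2 : ∀ k : Fin n, MemLp (fun ω => X' ω k) 2 μ := fun k => hL2 (Sum.inr k)
  have hZ2 : ∀ k : Fin n, MemLp (fun ω => X ω k - X' ω k) 2 μ := fun k =>
    (hX2 k).sub (hX'2 k)
  have hZc2 : ∀ l : Fin n, MemLp (fun ω => (starRingEnd ℂ) (X ω l - X' ω l)) 2 μ := fun l =>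
    memLp_conj_complex (hZ2 l)
  have hprod : ∀ k l : Fin n,
      Integrable (fun ω => (X ω k - X' ω k) * (starRingEnd ℂ) (X ω l - X' ω l)) μ :=
    fun k l => memLp_two_integrable_mul (hZ2 k) (hZc2 l)
  -- independence: off-diagonal second moments vanish
  set F := Sum.elim (fun (k : Fin n) ω => X ω k) (fun (k : Fin n) ω => X' ω k) with hF
  have hFint : ∀ i, Integrable (F i) μ := fun i => (hL2 i).integrable one_le_two'
  have hFcint : ∀ i, Integrable (fun ω => (starRingEnd ℂ) (F i ω)) μ := fun i =>
    (memLp_conj_complex (hL2 i)).integrable one_le_two'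
  have key : ∀ i j : Fin n ⊕ Fin n, i ≠ j →
      (∫ ω, F i ω * (starRingEnd ℂ) (F j ω) ∂μ) = 0 := by
    intro i j hij
    have hind : IndepFun (F i) (fun ω => (starRingEnd ℂ) (F j ω)) μ :=
      (hindep.indepFun hij).comp measurable_id Complex.continuous_conj.measurable
    rw [indepFun_integral_mul_complex hind (hFint i) (hFcint j), hmean i, zero_mul]
  have hzero : ∀ k l : Fin n, k ≠ l →
      ∫ ω, (X ω k - X' ω k) * (starRingEnd ℂ) (X ω l - X' ω l) ∂μ = 0 := by
    intro k l hkl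
    have expand : ∀ ω, (X ω k - X' ω k) * (starRingEnd ℂ) (X ω l - X' ω l) =
        F (Sum.inl k) ω * (starRingEnd ℂ) (F (Sum.inl l) ω)
          - F (Sum.inl k) ω * (starRingEnd ℂ) (F (Sum.inr l) ω)
          - (F (Sum.inr k) ω * (starRingEnd ℂ) (F (Sum.inl l) ω)
            - F (Sum.inr k) ω * (starRingEnd ℂ) (F (Sum.inr l) ω)) := by
      intro ω
      simp only [hF, Sum.elim_inl, Sum.elim_inr]
      rw [map_sub]
      ring
    have hint : ∀ i j : Fin n ⊕ Fin n,
        Integrable (fun ω => F i ω * (starRingEnd ℂ) (F j ω)) μ := fun i j =>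
      memLp_two_integrable_mul (hL2 i) (memLp_conj_complex (hL2 j))
    have hAB : Integrable (fun ω => F (Sum.inl k) ω * (starRingEnd ℂ) (F (Sum.inl l) ω)
        - F (Sum.inl k) ω * (starRingEnd ℂ) (F (Sum.inr l) ω)) μ :=
      (hint _ _).sub (hint _ _)
    have hCD : Integrable (fun ω => F (Sum.inr k) ω * (starRingEnd ℂ) (F (Sum.inl l) ω)
        - F (Sum.inr k) ω * (starRingEnd ℂ) (F (Sum.inr l) ω)) μ :=
      (hint _ _).sub (hint _ _)
    rw [integral_congr_ae (Filter.Eventually.of_forall expand),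
      integral_sub hAB hCD,
      integral_sub (hint _ _) (hint _ _), integral_sub (hint _ _) (hint _ _),
      key (Sum.inl k) (Sum.inl l) (by simpa using hkl),
      key (Sum.inl k) (Sum.inr l) (by simp),
      key (Sum.inr k) (Sum.inl l) (by simp),
      key (Sum.inr k) (Sum.inr l) (by simpa using hkl)]
    ring
  -- diagonal second moments
  have hdiag : ∀ k : Fin n,
      ∫ ω, (X ω k - X' ω k) * (starRingEnd ℂ) (X ω k - X' ω k) ∂μ =
        ((∫ ω, (‖X ω k - X' ω k‖) ^ 2 ∂μ : ℝ) : ℂ) := by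
    intro k
    have hpt : ∀ ω, (X ω k - X' ω k) * (starRingEnd ℂ) (X ω k - X' ω k) =
        (((‖X ω k - X' ω k‖) ^ 2 : ℝ) : ℂ) := by
      intro ω
      rw [Complex.mul_conj]
      norm_cast
      simp [Complex.sq_norm]
    rw [integral_congr_ae (Filter.Eventually.of_forall hpt)]
    exact integral_ofReal (𝕜 := ℂ) (f := fun ω => ‖X ω k - X' ω k‖ ^ 2)
  -- pointwise time integral
  have step1 : ∀ ω, (∫ s in (0 : ℝ)..t,
      (‖∑ k : Fin n, (X ω k - X' ω k) *
        Complex.exp (2 * Real.pi * Complex.I * ((k : ℕ) + 1 : ℂ) * (s : ℂ) / (T : ℂ))‖) ^ 2) =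
      (∑ k : Fin n, ∑ l : Fin n, (X ω k - X' ω k) * (starRingEnd ℂ) (X ω l - X' ω l)
        * ofdmC T t k l).re := fun ω =>
    ofdm_time_integral T t (fun k => X ω k - X' ω k)
  have hsum_int : Integrable (fun ω => ∑ k : Fin n, ∑ l : Fin n,
      (X ω k - X' ω k) * (starRingEnd ℂ) (X ω l - X' ω l) * ofdmC T t k l) μ :=
    integrable_finset_sum _ fun k _ => integrable_finset_sum _ fun l _ =>
      (hprod k l).mul_const _
  calc
    (∫ ω, (∫ s in (0 : ℝ)..t,
        (‖∑ k : Fin n, (X ω k - X' ω k) *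
          Complex.exp (2 * Real.pi * Complex.I * ((k : ℕ) + 1 : ℂ) * (s : ℂ) / (T : ℂ))‖) ^ 2)
      ∂μ)
      = ∫ ω, (∑ k : Fin n, ∑ l : Fin n, (X ω k - X' ω k) * (starRingEnd ℂ) (X ω l - X' ω l)
          * ofdmC T t k l).re ∂μ :=
        integral_congr_ae (Filter.Eventually.of_forall step1)
    _ = (∫ ω, ∑ k : Fin n, ∑ l : Fin n, (X ω k - X' ω k) * (starRingEnd ℂ) (X ω l - X' ω l)
          * ofdmC T t k l ∂μ).re := by
        simpa using integral_re hsum_int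
    _ = (∑ k : Fin n, ∑ l : Fin n,
          (∫ ω, (X ω k - X' ω k) * (starRingEnd ℂ) (X ω l - X' ω l) ∂μ)
          * ofdmC T t k l).re := by
        rw [integral_finset_sum _ (fun k _ => integrable_finset_sum _ fun l _ =>
          (hprod k l).mul_const _)]
        congr 1
        refine Finset.sum_congr rfl fun k _ => ?_
        rw [integral_finset_sum _ (fun l _ => (hprod k l).mul_const _)]
        exact Finset.sum_congr rfl fun l _ => integral_mul_const _ _
    _ = (∑ k : Fin n,
          ((∫ ω, (‖X ω k - X' ω k‖) ^ 2 ∂μ : ℝ) : ℂ) * (t : ℂ)).re := by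
        congr 1
        refine Finset.sum_congr rfl fun k _ => ?_
        rw [Finset.sum_eq_single k]
        · rw [hdiag k, ofdmC_diag]
        · intro l _ hlk
          rw [hzero k l (Ne.symm hlk), zero_mul]
        · intro hk
          exact absurd (Finset.mem_univ k) hk
    _ = t * ∑ k : Fin n, ∫ ω, (‖X ω k - X' ω k‖) ^ 2 ∂μ := by
        simp_rw [← Complex.ofReal_mul]
        rw [← Complex.ofReal_sum, Complex.ofReal_re, ← Finset.sum_mul, mul_comm]
end
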